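/- Let q > 1 be a prime power and n > 1. The function d(q) = qⁿ⁻¹ + qⁿ⁻² + ⋯ + q + 2 is strictly increasing in q on the positive integers; consequently, if Θ(Mₙ(F)) ≅ Θ(M_m(E)) for finite fields F, E and n > 1, then n = m and F ≅ E. -/

import Mathlib

/-- The associatedness relation on a ring: `a ~ b` iff `a = b*u = v*b` for units. -/
def ringAssoc (R : Type*) [Ring R] (a b : R) : Prop :=
  ∃ u v : Rˣ, a = b * u ∧ a = v * b

/-- Directed edges of the compressed zero-divisor graph `Θ(R)`:
`[a] → [b]` iff `a * b = 0`. -/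
def thetaEdge (R : Type*) [Ring R] (x y : Quot (ringAssoc R)) : Prop :=
  ∃ a b : R, Quot.mk _ a = x ∧ Quot.mk _ b = y ∧ a * b = 0

/-- `Θ(R) ≅ Θ(S)` as directed graphs. -/
def ThetaIso (R S : Type*) [Ring R] [Ring S] : Prop :=
  ∃ e : Quot (ringAssoc R) ≃ Quot (ringAssoc S),
    ∀ x y, thetaEdge R x y ↔ thetaEdge S (e x) (e y)

section assoc

variable {R : Type*} [Ring R]

theorem ringAssoc_equivalence : Equivalence (ringAssoc R) where
  refl a := ⟨1, 1, by simp, by simp⟩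
  symm := by
    rintro a b ⟨u, v, h1, h2⟩
    refine ⟨u⁻¹, v⁻¹, ?_, ?_⟩
    · rw [h1]; simp [mul_assoc]
    · rw [h2]; simp [← mul_assoc]
  trans := by
    rintro a b c ⟨u, v, h1, h2⟩ ⟨u', v', h1', h2'⟩
    refine ⟨u' * u, v * v', ?_, ?_⟩
    · rw [Units.val_mul, ← mul_assoc, ← h1', ← h1]
    · rw [Units.val_mul, mul_assoc, ← h2', ← h2]

theorem ringAssoc_mk_eq {a b : R} :
    (Quot.mk (ringAssoc R) a = Quot.mk (ringAssoc R) b) ↔ ringAssoc R a b := by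
  rw [Quot.eq]
  exact ringAssoc_equivalence.eqvGen_iff

theorem thetaEdge_mk {a b : R} :
    thetaEdge R (Quot.mk _ a) (Quot.mk _ b) ↔ a * b = 0 := by
  constructor
  · rintro ⟨a', b', ha, hb, h⟩
    obtain ⟨u, v, h1, h2⟩ := ringAssoc_mk_eq.mp ha
    obtain ⟨u', v', h1', h2'⟩ := ringAssoc_mk_eq.mp hb
    have ha2 : a = (↑v⁻¹ : R) * a' := by rw [h2, ← mul_assoc]; simp
    have hb2 : b = b' * (↑u'⁻¹ : R) := by rw [h1', mul_assoc]; simp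
    rw [ha2, hb2, mul_assoc, ← mul_assoc a' b', h]
    simp
  · intro h
    exact ⟨a, b, rfl, rfl, h⟩

end assoc

section matrixside

open LinearMap Matrix Submodule

variable {F : Type*} [Field F] {n : ℕ}

theorem unit_mulVecLin_ker (v : (Matrix (Fin n) (Fin n) F)ˣ) :
    LinearMap.ker ((v : Matrix (Fin n) (Fin n) F)).mulVecLin = ⊥ := by
  rw [LinearMap.ker_eq_bot]
  have hleft : ∀ x, ((↑v⁻¹ : Matrix (Fin n) (Fin n) F)).mulVecLin
      (((v : Matrix (Fin n) (Fin n) F)).mulVecLin x) = x := by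
    intro x
    rw [← LinearMap.comp_apply, ← Matrix.mulVecLin_mul, v.inv_mul, Matrix.mulVecLin_one, LinearMap.id_apply]
  exact Function.LeftInverse.injective hleft

theorem mulVecLin_eq_zero_iff {a : Matrix (Fin n) (Fin n) F} :
    a.mulVecLin = 0 ↔ a = 0 := by
  rw [← Matrix.toLin'_apply', LinearEquiv.map_eq_zero_iff]

theorem matrix_mul_eq_zero_iff {a b : Matrix (Fin n) (Fin n) F} :
    a * b = 0 ↔ LinearMap.range b.mulVecLin ≤ LinearMap.ker a.mulVecLin := by
  rw [LinearMap.range_le_ker_iff, ← Matrix.mulVecLin_mul, mulVecLin_eq_zero_iff]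

/-- The kernel, as a function on compressed classes. -/
noncomputable def kerQ : Quot (ringAssoc (Matrix (Fin n) (Fin n) F)) →
    Submodule F (Fin n → F) :=
  Quot.lift (fun a => LinearMap.ker a.mulVecLin) (by
    rintro a b ⟨u, v, _, h2⟩
    show LinearMap.ker a.mulVecLin = LinearMap.ker b.mulVecLin
    rw [h2, Matrix.mulVecLin_mul, LinearMap.ker_comp, unit_mulVecLin_ker,
      Submodule.comap_bot])

theorem kerQ_mk (a : Matrix (Fin n) (Fin n) F) :
    kerQ (Quot.mk _ a) = LinearMap.ker a.mulVecLin := rfl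

theorem exists_matrix_range_eq (K : Submodule F (Fin n → F)) :
    ∃ b : Matrix (Fin n) (Fin n) F, LinearMap.range b.mulVecLin = K := by
  obtain ⟨K', hK'⟩ := Submodule.exists_isCompl K
  refine ⟨LinearMap.toMatrix' (K.subtype ∘ₗ (K.projectionOnto K' hK')), ?_⟩
  rw [← Matrix.toLin'_apply', Matrix.toLin'_toMatrix', LinearMap.range_comp,
    Submodule.linearProjOfIsCompl_range hK', Submodule.map_top, Submodule.range_subtype]

theorem exists_matrix_ker_eq (K : Submodule F (Fin n → F)) :
    ∃ a : Matrix (Fin n) (Fin n) F, LinearMap.ker a.mulVecLin = K := by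
  obtain ⟨K', hK'⟩ := Submodule.exists_isCompl K
  refine ⟨LinearMap.toMatrix' (K'.subtype ∘ₗ (K'.projectionOnto K hK'.symm)), ?_⟩
  rw [← Matrix.toLin'_apply', Matrix.toLin'_toMatrix', LinearMap.ker_comp,
    Submodule.ker_subtype, Submodule.comap_bot, Submodule.linearProjOfIsCompl_ker]

theorem kerQ_surjective :
    Function.Surjective (kerQ (F := F) (n := n)) := by
  intro K
  obtain ⟨a, ha⟩ := exists_matrix_ker_eq K
  exact ⟨Quot.mk _ a, ha⟩

theorem nbhd_iff {x y : Quot (ringAssoc (Matrix (Fin n) (Fin n) F))} :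
    (∀ z, thetaEdge _ x z → thetaEdge _ y z) ↔ kerQ x ≤ kerQ y := by
  obtain ⟨a, rfl⟩ := Quot.exists_rep x
  obtain ⟨c, rfl⟩ := Quot.exists_rep y
  constructor
  · intro h
    obtain ⟨b, hb⟩ := exists_matrix_range_eq (LinearMap.ker a.mulVecLin)
    have h1 : thetaEdge _ (Quot.mk _ a) (Quot.mk _ b) :=
      thetaEdge_mk.mpr (matrix_mul_eq_zero_iff.mpr (le_of_eq hb))
    have h2 := matrix_mul_eq_zero_iff.mp (thetaEdge_mk.mp (h _ h1))
    rw [kerQ_mk, kerQ_mk, ← hb]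
    exact h2
  · intro h z hz
    obtain ⟨b, rfl⟩ := Quot.exists_rep z
    exact thetaEdge_mk.mpr (matrix_mul_eq_zero_iff.mpr
      (le_trans (matrix_mul_eq_zero_iff.mp (thetaEdge_mk.mp hz)) h))

end matrixside

section orderIso

theorem orderIso_of_maps {A B α β : Type*} [PartialOrder α] [PartialOrder β]
    (pA : A → α) (pB : B → β) (sA : Function.Surjective pA) (sB : Function.Surjective pB)
    (e : A ≃ B) (h : ∀ x y, pA x ≤ pA y ↔ pB (e x) ≤ pB (e y)) :
    Nonempty (α ≃o β) := by
  have h' : ∀ x y : B, pB x ≤ pB y ↔ pA (e.symm x) ≤ pA (e.symm y) := by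
    intro x y
    rw [h (e.symm x) (e.symm y), e.apply_symm_apply, e.apply_symm_apply]
  choose fA hfA using sA
  choose fB hfB using sB
  refine ⟨⟨⟨fun K => pB (e (fA K)), fun L => pA (e.symm (fB L)), ?_, ?_⟩, ?_⟩⟩
  · intro K
    have hy := hfB (pB (e (fA K)))
    have t1 := h' (fB (pB (e (fA K)))) (e (fA K))
    have t2 := h' (e (fA K)) (fB (pB (e (fA K))))
    simp only [e.symm_apply_apply, hfA] at t1 t2
    exact le_antisymm (t1.mp (le_of_eq hy)) (t2.mp (le_of_eq hy.symm))
  · intro L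
    have hy := hfA (pA (e.symm (fB L)))
    have t1 := h (fA (pA (e.symm (fB L)))) (e.symm (fB L))
    have t2 := h (e.symm (fB L)) (fA (pA (e.symm (fB L))))
    simp only [e.apply_symm_apply, hfB, hfA] at t1 t2
    exact le_antisymm (t1.mp le_rfl) (t2.mp le_rfl)
  · intro K K'
    show pB (e (fA K)) ≤ pB (e (fA K')) ↔ K ≤ K'
    rw [← h (fA K) (fA K'), hfA, hfA]

end orderIso

section chains

theorem chain_le {K : Type*} [Field K] {n k : ℕ} (f : Fin (k + 1) → Submodule K (Fin n → K))
    (hf : StrictMono f) : k ≤ n := by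
  have key : ∀ j, ∀ hj : j < k + 1, j ≤ Module.finrank K (f ⟨j, hj⟩) := by
    intro j
    induction j with
    | zero => intro hj; exact Nat.zero_le _
    | succ i ih =>
      intro hj
      have hi : i < k + 1 := Nat.lt_of_succ_lt hj
      have hlt : f ⟨i, hi⟩ < f ⟨i + 1, hj⟩ := hf (by simp [Fin.lt_def])
      have h1 := Submodule.finrank_lt_finrank_of_lt hlt
      have h2 := ih hi
      omega
  have h1 := key k (Nat.lt_succ_self k)
  have h2 : Module.finrank K (f ⟨k, Nat.lt_succ_self k⟩) ≤ Module.finrank K (Fin n → K) :=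
    (f ⟨k, Nat.lt_succ_self k⟩).finrank_le
  rw [Module.finrank_fin_fun] at h2
  omega

theorem chain_exists (K : Type*) [Field K] (n : ℕ) :
    ∃ f : Fin (n + 1) → Submodule K (Fin n → K), StrictMono f := by
  refine ⟨fun k => ⨅ (i : Fin n) (_ : (k : ℕ) ≤ (i : ℕ)),
    LinearMap.ker (LinearMap.proj (R := K) (φ := fun _ : Fin n => K) i), ?_⟩
  have hmem : ∀ (k : Fin (n + 1)) (x : Fin n → K),
      (x ∈ ⨅ (i : Fin n) (_ : (k : ℕ) ≤ (i : ℕ)),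
        LinearMap.ker (LinearMap.proj (R := K) (φ := fun _ : Fin n => K) i)) ↔
      ∀ i : Fin n, (k : ℕ) ≤ (i : ℕ) → x i = 0 := by
    intro k x
    simp [Submodule.mem_iInf]
  intro k k' hkk'
  have hkv : (k : ℕ) < (k' : ℕ) := hkk'
  have hkn : (k : ℕ) < n := lt_of_lt_of_le hkv (Nat.lt_succ_iff.mp k'.isLt)
  rw [SetLike.lt_iff_le_and_exists]
  constructor
  · intro x hx
    rw [hmem] at hx ⊢
    intro i hi
    exact hx i (le_trans (le_of_lt hkv) hi)
  · refine ⟨Pi.single (⟨(k : ℕ), hkn⟩ : Fin n) 1, ?_, ?_⟩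
    · rw [hmem]
      intro i hi
      apply Pi.single_eq_of_ne
      intro hcon
      rw [hcon] at hi
      simp at hi
      omega
    · rw [hmem]
      push_neg
      refine ⟨⟨(k : ℕ), hkn⟩, le_refl _, ?_⟩
      rw [Pi.single_eq_same]
      exact one_ne_zero

end chains

section atoms

theorem atom_char {K V : Type*} [Field K] [AddCommGroup V] [Module K V]
    {L : Submodule K V} : IsAtom L ↔ ∃ v : V, v ≠ 0 ∧ L = Submodule.span K {v} := by
  constructor
  · intro hL
    obtain ⟨v, hvL, hv0⟩ := Submodule.exists_mem_ne_zero_of_ne_bot hL.1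
    refine ⟨v, hv0, ?_⟩
    have hle : Submodule.span K {v} ≤ L := (Submodule.span_singleton_le_iff_mem v L).mpr hvL
    rcases lt_or_eq_of_le hle with hlt | heq
    · exact absurd (hL.2 _ hlt)
        (by simpa using (Submodule.span_singleton_eq_bot (R := K) (x := v)).not.mpr hv0)
    · exact heq.symm
  · rintro ⟨v, hv0, rfl⟩
    constructor
    · simpa using (Submodule.span_singleton_eq_bot (R := K) (x := v)).not.mpr hv0
    · intro b hb
      by_contra hbne
      obtain ⟨w, hwb, hw0⟩ := Submodule.exists_mem_ne_zero_of_ne_bot hbne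
      have hwspan : w ∈ Submodule.span K {v} := hb.le hwb
      obtain ⟨c, rfl⟩ := Submodule.mem_span_singleton.mp hwspan
      have hc : c ≠ 0 := by
        rintro rfl
        simp at hw0
      have hvb : v ∈ b := by
        have h3 := b.smul_mem c⁻¹ hwb
        rwa [smul_smul, inv_mul_cancel₀ hc, one_smul] at h3
      exact absurd ((Submodule.span_singleton_le_iff_mem v b).mpr hvb) hb.not_ge

theorem card_atoms (K : Type*) [Field K] [Fintype K] (n : ℕ) :
    Nat.card {L : Submodule K (Fin n → K) // IsAtom L} * (Fintype.card K - 1)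
      = Fintype.card K ^ n - 1 := by
  classical
  haveI : Finite (Submodule K (Fin n → K)) :=
    Finite.of_injective (fun L : Submodule K (Fin n → K) => (L : Set (Fin n → K)))
      SetLike.coe_injective
  haveI := Fintype.ofFinite {L : Submodule K (Fin n → K) // IsAtom L}
  set g : {v : Fin n → K // v ≠ 0} → {L : Submodule K (Fin n → K) // IsAtom L} :=
    fun v => ⟨Submodule.span K {v.1}, atom_char.mpr ⟨v.1, v.2, rfl⟩⟩ with hg
  have hfib : ∀ L : {L : Submodule K (Fin n → K) // IsAtom L},
      Fintype.card {v // g v = L} = Fintype.card K - 1 := by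
    intro L
    obtain ⟨v₀, hv₀, hspan⟩ := atom_char.mp L.2
    have hbij : Function.Bijective (fun c : {c : K // c ≠ 0} =>
        (⟨⟨c.1 • v₀, smul_ne_zero c.2 hv₀⟩, Subtype.ext (by
          show Submodule.span K {c.1 • v₀} = L.1
          rw [hspan]
          exact Submodule.span_singleton_smul_eq (isUnit_iff_ne_zero.mpr c.2) v₀)⟩ :
          {v // g v = L})) := by
      constructor
      · intro c c' hcc'
        have h4 : c.1 • v₀ = c'.1 • v₀ := congrArg (fun t => t.1.1) hcc'
        exact Subtype.ext (smul_left_injective K hv₀ h4)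
      · rintro ⟨⟨v, hv0⟩, hfeq⟩
        have hveq : Submodule.span K {v} = Submodule.span K {v₀} := by
          have h5 : (Submodule.span K {v} : Submodule K (Fin n → K)) = L.1 :=
            congrArg (fun t => t.1) hfeq
          rw [h5, hspan]
        have hvmem : v ∈ Submodule.span K {v₀} := by
          rw [← hveq]
          exact Submodule.mem_span_singleton_self v
        obtain ⟨c, rfl⟩ := Submodule.mem_span_singleton.mp hvmem
        have hc : c ≠ 0 := by
          rintro rfl
          simp at hv0
        exact ⟨⟨c, hc⟩, rfl⟩
    have hcardfib : Fintype.card {c : K // c ≠ 0} = Fintype.card {v // g v = L} :=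
      Fintype.card_congr (Equiv.ofBijective _ hbij)
    rw [← hcardfib]
    have h6 : Fintype.card {c : K // c ≠ 0} = Fintype.card K - 1 := Set.card_ne_eq 0
    exact h6
  have hsig : Fintype.card {v : Fin n → K // v ≠ 0} =
      ∑ L : {L : Submodule K (Fin n → K) // IsAtom L}, Fintype.card {v // g v = L} := by
    rw [← Fintype.card_sigma]
    exact Fintype.card_congr (Equiv.sigmaFiberEquiv g).symm
  have htot : Fintype.card {v : Fin n → K // v ≠ 0} = Fintype.card K ^ n - 1 := by
    have h7 : Fintype.card {v : Fin n → K // v ≠ 0} = Fintype.card (Fin n → K) - 1 :=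
      Set.card_ne_eq 0
    rw [h7, Fintype.card_fun]
    simp
  rw [Nat.card_eq_fintype_card, ← htot, hsig]
  rw [Finset.sum_congr rfl (fun L _ => hfib L), Finset.sum_const, Finset.card_univ, smul_eq_mul]

end atoms

section arith

theorem geom_nat (q n : ℕ) (hq : 1 ≤ q) :
    (∑ i ∈ Finset.range n, q ^ i) * (q - 1) = q ^ n - 1 := by
  have hz := geom_sum_mul (x := (q : ℤ)) n
  have hqn : 1 ≤ q ^ n := Nat.one_le_pow n q (by omega)
  zify [hq, hqn]
  exact hz

theorem sum_pow_lt {n q q' : ℕ} (hn : 1 < n) (hlt : q < q') :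
    ∑ i ∈ Finset.range n, q ^ i < ∑ i ∈ Finset.range n, q' ^ i := by
  apply Finset.sum_lt_sum (fun i _ => Nat.pow_le_pow_left (le_of_lt hlt) i)
  exact ⟨1, Finset.mem_range.mpr hn, by simpa using hlt⟩

theorem sum_pow_inj {n q q' : ℕ} (hn : 1 < n)
    (h : ∑ i ∈ Finset.range n, q ^ i = ∑ i ∈ Finset.range n, q' ^ i) : q = q' := by
  rcases lt_trichotomy q q' with hlt | heq | hgt
  · exact absurd h (Nat.ne_of_lt (sum_pow_lt hn hlt))
  · exact heq
  · exact absurd h.symm (Nat.ne_of_lt (sum_pow_lt hn hgt))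

end arith

/-- The function `d(q) = qⁿ⁻¹ + ⋯ + q + 2` is strictly increasing in `q` on the
positive integers; consequently, if `Θ(Mₙ(F)) ≅ Θ(M_m(E))` for finite fields
`F`, `E` and `n > 1` then `n = m` and `F ≅ E`. -/
theorem stmt_8 (n m : ℕ) (hn : 1 < n)
    (F E : Type*) [Field F] [Fintype F] [Field E] [Fintype E] :
    (∀ q q' : ℕ, 0 < q → q < q' →
      (∑ i ∈ Finset.range n, q ^ i) + 1 < (∑ i ∈ Finset.range n, q' ^ i) + 1) ∧
    (ThetaIso (Matrix (Fin n) (Fin n) F) (Matrix (Fin m) (Fin m) E) →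
      n = m ∧ Nonempty (F ≃+* E)) := by
  constructor
  · intro q q' _ hlt
    have := sum_pow_lt hn hlt
    omega
  · rintro ⟨e, he⟩
    have key : ∀ x y, kerQ (F := F) x ≤ kerQ y ↔ kerQ (F := E) (e x) ≤ kerQ (e y) := by
      intro x y
      rw [← nbhd_iff, ← nbhd_iff]
      constructor
      · intro h z hz
        have h1 : thetaEdge _ x (e.symm z) := (he x (e.symm z)).mpr (by
          rwa [e.apply_symm_apply])
        have h2 := (he y (e.symm z)).mp (h _ h1)
        rwa [e.apply_symm_apply] at h2
      · intro h z hz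
        exact (he y z).mpr (h _ ((he x z).mp hz))
    obtain ⟨g⟩ := orderIso_of_maps _ _ kerQ_surjective kerQ_surjective e key
    obtain ⟨f, hf⟩ := chain_exists F n
    obtain ⟨f', hf'⟩ := chain_exists E m
    have hnm : n ≤ m := chain_le (fun i => g (f i)) (g.strictMono.comp hf)
    have hmn : m ≤ n := chain_le (fun i => g.symm (f' i)) (g.symm.strictMono.comp hf')
    have hmeq : n = m := le_antisymm hnm hmn
    subst hmeq
    refine ⟨rfl, ?_⟩
    have hatoms : Nat.card {L : Submodule F (Fin n → F) // IsAtom L} =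
        Nat.card {L : Submodule E (Fin n → E) // IsAtom L} :=
      Nat.card_congr (Equiv.subtypeEquiv g.toEquiv (fun L => (OrderIso.isAtom_iff g L).symm))
    have c1 := card_atoms F n
    have c2 := card_atoms E n
    have hqF : 1 ≤ Fintype.card F := Fintype.card_pos
    have hqE : 1 ≤ Fintype.card E := Fintype.card_pos
    have g1 := geom_nat (Fintype.card F) n hqF
    have g2 := geom_nat (Fintype.card E) n hqE
    have h2F : 1 < Fintype.card F := Fintype.one_lt_card
    have h2E : 1 < Fintype.card E := Fintype.one_lt_card
    have eF : Nat.card {L : Submodule F (Fin n → F) // IsAtom L} =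
        ∑ i ∈ Finset.range n, Fintype.card F ^ i := by
      apply Nat.eq_of_mul_eq_mul_right (show 0 < Fintype.card F - 1 by omega)
      rw [c1, g1]
    have eE : Nat.card {L : Submodule E (Fin n → E) // IsAtom L} =
        ∑ i ∈ Finset.range n, Fintype.card E ^ i := by
      apply Nat.eq_of_mul_eq_mul_right (show 0 < Fintype.card E - 1 by omega)
      rw [c2, g2]
    have hsum : ∑ i ∈ Finset.range n, Fintype.card F ^ i
        = ∑ i ∈ Finset.range n, Fintype.card E ^ i := by
      rw [← eF, ← eE, hatoms]
    have hcard : Fintype.card F = Fintype.card E := sum_pow_inj hn hsum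
    exact ⟨FiniteField.ringEquivOfCardEq hcard⟩
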